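/- Let F, t*, f(t*), ε be as follows: 0 < F(t*) < 1, F differentiable at t* with derivative f(t*) > 0, ε = f(t*)/F(t*). Let (c_n), (l_n) be positive integers with c_n → ∞, l_n → ∞, l_n·F(t*)^{c_n} → 1. For each n let T^{(n)}_{i,j} (1 ≤ i ≤ c_n, 1 ≤ j ≤ l_n) be i.i.d. with distribution function F, and fix a real t. Let N_n be the number of column indices j ≤ l_n such that max_{1≤i≤c_n} T^{(n)}_{i,j} ≤ t* + t/c_n. Then for every nonnegative integer k, P(N_n = k) converges, as n → ∞, to e^{−λ} λ^k / k! where λ = exp(ε t). (The number of scaled column maxima below the level t converges in distribution to a Poisson random variable with mean exp(ε t).) -/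

import Mathlib

open MeasureTheory ProbabilityTheory Filter
open scoped ENNReal

lemma CMX_aux_log_ratio :
    Tendsto (fun x : ℝ => if x = 0 then (1:ℝ) else Real.log (1 + x) / x) (nhds 0) (nhds 1) := by
  rw [← nhdsNE_sup_pure]
  refine Tendsto.sup ?_ ?_
  · have h1 : Tendsto (fun z : ℝ => (Real.log z - Real.log 1) / (z - 1)) (nhdsWithin 1 {(1:ℝ)}ᶜ)
        (nhds 1) := by
      have h := (Real.hasDerivAt_log one_ne_zero)
      rw [hasDerivAt_iff_tendsto_slope] at h
      rw [inv_one] at h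
      refine h.congr fun z => ?_
      simp [slope_def_field]
    have h2 : Tendsto (fun x : ℝ => 1 + x) (nhdsWithin 0 {(0:ℝ)}ᶜ) (nhdsWithin 1 {(1:ℝ)}ᶜ) := by
      refine Tendsto.inf ?_ ?_
      · simpa using (continuous_add_left (1:ℝ)).tendsto (0:ℝ)
      · refine tendsto_principal.mpr (eventually_principal.mpr fun x hx => ?_)
        simp only [Set.mem_compl_iff, Set.mem_singleton_iff] at hx ⊢
        intro h; exact hx (by linarith)
    have h3 := h1.comp h2
    refine h3.congr' ?_
    filter_upwards [self_mem_nhdsWithin] with x hx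
    simp only [Set.mem_compl_iff, Set.mem_singleton_iff] at hx
    simp [Function.comp, hx, Real.log_one]
  · rw [tendsto_pure_left]
    intro s hs
    simp only [if_pos rfl]
    exact mem_of_mem_nhds hs

lemma CMX_aux_exp_lim {a : ℝ} {y : ℕ → ℝ} {m : ℕ → ℕ}
    (hy : Tendsto y atTop (nhds 0))
    (hmy : Tendsto (fun n => (m n : ℝ) * y n) atTop (nhds a)) :
    Tendsto (fun n => (1 + y n) ^ (m n)) atTop (nhds (Real.exp a)) := by
  have hlog : Tendsto (fun n => (m n : ℝ) * Real.log (1 + y n)) atTop (nhds a) := by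
    have := hmy.mul (CMX_aux_log_ratio.comp hy)
    rw [mul_one] at this
    refine this.congr fun n => ?_
    by_cases h : y n = 0
    · simp [h]
    · rw [Function.comp_apply, if_neg h]
      field_simp [h]
  have hpos : ∀ᶠ n in atTop, (0:ℝ) < 1 + y n := by
    have : ∀ᶠ n in atTop, y n > -1 := hy.eventually (eventually_gt_nhds (by norm_num))
    filter_upwards [this] with n hn; linarith
  have := (Real.continuous_exp.tendsto a).comp hlog
  refine this.congr' ?_
  filter_upwards [hpos] with n hn
  simp only [Function.comp]
  rw [Real.exp_nat_mul, Real.exp_log hn]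

lemma CMX_aux_binom_poisson {lam : ℝ} (k : ℕ) {x : ℕ → ℝ} {l : ℕ → ℕ}
    (hl : Tendsto l atTop atTop) (hlpos : ∀ n, 0 < l n)
    (hlx : Tendsto (fun n => (l n : ℝ) * x n) atTop (nhds lam)) :
    Tendsto (fun n => ((l n).choose k : ℝ) * x n ^ k * (1 - x n) ^ (l n - k)) atTop
      (nhds (Real.exp (-lam) * lam ^ k / k.factorial)) := by
  have hlR : Tendsto (fun n => (l n : ℝ)) atTop atTop := tendsto_natCast_atTop_atTop.comp hl
  have hx0 : Tendsto x atTop (nhds 0) := by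
    have h := hlx.mul hlR.inv_tendsto_atTop
    rw [mul_zero] at h
    refine h.congr fun n => ?_
    rw [Pi.inv_apply]
    field_simp [(Nat.cast_pos.mpr (hlpos n)).ne']
  have hlk : ∀ᶠ n in atTop, k ≤ l n := hl.eventually_ge_atTop k
  -- part 1
  have part1 : Tendsto (fun n => ((l n).choose k : ℝ) * x n ^ k) atTop
      (nhds (lam ^ k / k.factorial)) := by
    have hprod : Tendsto (fun n => ∏ i ∈ Finset.range k, (((l n : ℝ) - i) * x n)) atTop
        (nhds (lam ^ k)) := by
      have : Tendsto (fun n => ∏ i ∈ Finset.range k, (((l n : ℝ) - i) * x n)) atTop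
          (nhds (∏ _i ∈ Finset.range k, lam)) := by
        refine tendsto_finset_prod _ fun i _ => ?_
        have : Tendsto (fun n => (l n : ℝ) * x n - (i : ℝ) * x n) atTop (nhds (lam - i * 0)) :=
          hlx.sub (tendsto_const_nhds.mul hx0)
        rw [mul_zero, sub_zero] at this
        refine this.congr fun n => by ring
      simpa using this
    have h := hprod.div_const (k.factorial : ℝ)
    refine h.congr' ?_
    filter_upwards [hlk] with n hn
    have hcast : ∏ i ∈ Finset.range k, ((l n : ℝ) - i) = ((l n).descFactorial k : ℝ) := by
      rw [Nat.descFactorial_eq_prod_range, Nat.cast_prod]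
      refine Finset.prod_congr rfl fun i hi => ?_
      rw [Finset.mem_range] at hi
      rw [Nat.cast_sub (le_trans hi.le hn)]
    rw [Finset.prod_mul_distrib, Finset.prod_const, Finset.card_range, hcast,
      Nat.descFactorial_eq_factorial_mul_choose, Nat.cast_mul]
    field_simp
  -- part 2
  have part2 : Tendsto (fun n => (1 - x n) ^ (l n - k)) atTop (nhds (Real.exp (-lam))) := by
    have hmy : Tendsto (fun n => ((l n - k : ℕ) : ℝ) * (-x n)) atTop (nhds (-lam)) := by
      have h : Tendsto (fun n => -((l n : ℝ) * x n) + (k : ℝ) * x n) atTop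
          (nhds (-lam + (k : ℝ) * 0)) := hlx.neg.add (tendsto_const_nhds.mul hx0)
      rw [mul_zero, add_zero] at h
      refine h.congr' ?_
      filter_upwards [hlk] with n hn
      rw [Nat.cast_sub hn]
      ring
    have hx0n : Tendsto (fun n => -x n) atTop (nhds 0) := by simpa using hx0.neg
    have := CMX_aux_exp_lim hx0n hmy
    refine this.congr fun n => by rw [← sub_eq_add_neg]
  have h := part1.mul part2
  have heq : lam ^ k / (k.factorial : ℝ) * Real.exp (-lam)
      = Real.exp (-lam) * lam ^ k / k.factorial := by ring
  rw [heq] at h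
  exact h

lemma CMX_aux_coupling {F : ℝ → ℝ} {tstar fstar t : ℝ} {c l : ℕ → ℕ}
    (h0 : 0 < F tstar) (hd : HasDerivAt F fstar tstar)
    (hcpos : ∀ n, 0 < c n) (hc : Tendsto c atTop atTop)
    (hcouple : Tendsto (fun n => (l n : ℝ) * F tstar ^ c n) atTop (nhds 1)) :
    Tendsto (fun n => (l n : ℝ) * F (tstar + t / c n) ^ c n) atTop
      (nhds (Real.exp (fstar / F tstar * t))) := by
  have hcR : Tendsto (fun n => (c n : ℝ)) atTop atTop := tendsto_natCast_atTop_atTop.comp hc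
  have hcne : ∀ n, (c n : ℝ) ≠ 0 := fun n => (Nat.cast_pos.mpr (hcpos n)).ne'
  -- derivative step
  have hder : Tendsto (fun n => (c n : ℝ) * (F (tstar + t / c n) - F tstar)) atTop
      (nhds (fstar * t)) := by
    rcases eq_or_ne t 0 with rfl | ht
    · simpa using tendsto_const_nhds (x := (0:ℝ)) (f := atTop (α := ℕ))
    · have hslope : Tendsto (fun z => (F z - F tstar) / (z - tstar))
          (nhdsWithin tstar {tstar}ᶜ) (nhds fstar) := by
        have h := hd
        rw [hasDerivAt_iff_tendsto_slope] at h
        refine h.congr fun z => ?_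
        simp [slope_def_field]
      have hz : Tendsto (fun n => tstar + t / c n) atTop (nhdsWithin tstar {tstar}ᶜ) := by
        rw [tendsto_nhdsWithin_iff]
        constructor
        · have : Tendsto (fun n => t / (c n : ℝ)) atTop (nhds 0) :=
            tendsto_const_nhds.div_atTop hcR
          simpa using tendsto_const_nhds.add this
        · refine Eventually.of_forall fun n => ?_
          simp only [Set.mem_compl_iff, Set.mem_singleton_iff]
          intro h
          have : t / (c n : ℝ) = 0 := by linarith
          exact ht (by field_simp [hcne n] at this; simpa using this)
      have h2 := hslope.comp hz
      have h3 := h2.const_mul t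
      rw [mul_comm] at h3
      refine h3.congr fun n => ?_
      simp only [Function.comp]
      rw [add_sub_cancel_left]
      field_simp
  set r : ℕ → ℝ := fun n => (F (tstar + t / c n) - F tstar) / F tstar with hr
  have hcr : Tendsto (fun n => (c n : ℝ) * r n) atTop (nhds (fstar * t / F tstar)) := by
    have := hder.div_const (F tstar)
    refine this.congr fun n => ?_
    simp only [hr]
    ring
  have hr0 : Tendsto r atTop (nhds 0) := by
    have h := hcr.mul hcR.inv_tendsto_atTop
    rw [mul_zero] at h
    refine h.congr fun n => ?_
    rw [Pi.inv_apply]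
    field_simp [hcne n]
  have hpow := CMX_aux_exp_lim hr0 hcr
  have hmain := hcouple.mul hpow
  rw [one_mul] at hmain
  have heq : fstar * t / F tstar = fstar / F tstar * t := by ring
  rw [heq] at hmain
  refine hmain.congr fun n => ?_
  have hFr : F (tstar + t / c n) = F tstar * (1 + r n) := by
    simp only [hr]
    field_simp
    ring
  rw [hFr, mul_pow]
  ring

lemma CMX_aux_prob {Ω : Type*} [MeasurableSpace Ω] (P : Measure Ω) [IsProbabilityMeasure P]
    {cn ln : ℕ} (hcn : 0 < cn) (hln : 0 < ln)
    (T : Fin cn → Fin ln → Ω → ℝ) (hmeas : ∀ i j, Measurable (T i j))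
    (hindep : iIndepFun (fun p : Fin cn × Fin ln => T p.1 p.2) P)
    (s Fs : ℝ) (hF : ∀ i j, (P {ω | T i j ω ≤ s}).toReal = Fs) (k : ℕ) :
    (P {ω | Set.ncard {j : Fin ln | ∀ i, T i j ω ≤ s} = k}).toReal
      = (ln.choose k : ℝ) * (Fs ^ cn) ^ k * (1 - Fs ^ cn) ^ (ln - k) := by
  have hFs0 : 0 ≤ Fs := by
    rw [← hF ⟨0, hcn⟩ ⟨0, hln⟩]; exact ENNReal.toReal_nonneg
  have hFs1 : Fs ≤ 1 := by
    rw [← hF ⟨0, hcn⟩ ⟨0, hln⟩]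
    exact le_trans (ENNReal.toReal_mono ENNReal.one_ne_top prob_le_one) (by simp)
  set q : ℝ≥0∞ := ENNReal.ofReal Fs with hqdef
  have hq1 : q ≤ 1 := by
    rw [hqdef]
    exact ENNReal.ofReal_le_one.mpr hFs1
  set A : Fin ln → Set Ω := fun j => {ω | ∀ i, T i j ω ≤ s} with hAdef
  have hApre : ∀ j, A j = ⋂ i, T i j ⁻¹' Set.Iic s := by
    intro j; ext ω; simp [hAdef, Set.mem_iInter]
  have hAmeas : ∀ j, MeasurableSet (A j) := by
    intro j; rw [hApre]
    exact MeasurableSet.iInter fun i => (hmeas i j) measurableSet_Iic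
  have hPsingle : ∀ i j, P (T i j ⁻¹' Set.Iic s) = q := by
    intro i j
    have h1 : (T i j ⁻¹' Set.Iic s) = {ω | T i j ω ≤ s} := rfl
    rw [h1, ← ENNReal.ofReal_toReal (measure_ne_top P _), hF i j]
  -- measure of intersections over a finset of columns
  have hInter : ∀ S : Finset (Fin ln), P (⋂ j ∈ S, A j) = q ^ (cn * S.card) := by
    intro S
    have hset : (⋂ j ∈ S, A j)
        = ⋂ p ∈ (Finset.univ ×ˢ S : Finset (Fin cn × Fin ln)),
            (fun ω => T p.1 p.2 ω) ⁻¹' Set.Iic s := by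
      ext ω
      simp only [Set.mem_iInter, hAdef, Set.mem_setOf_eq, Finset.mem_product, Finset.mem_univ,
        true_and, Set.mem_preimage, Set.mem_Iic]
      constructor
      · rintro h ⟨i, j⟩ hj; exact h j hj i
      · intro h j hj i; exact h (i, j) hj
    rw [hset, hindep.meas_biInter (fun p _ => ⟨Set.Iic s, measurableSet_Iic, rfl⟩)]
    rw [Finset.prod_congr rfl fun p _ => hPsingle p.1 p.2, Finset.prod_const,
      Finset.card_product, Finset.card_univ, Fintype.card_fin]
  have hPA : ∀ j, P (A j) = q ^ cn := by
    intro j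
    have := hInter {j}
    simpa using this
  -- independence of the column events
  have hiIndepSet : iIndepSet A P := by
    rw [iIndepSet_iff_meas_biInter hAmeas]
    intro S
    rw [hInter, Finset.prod_congr rfl fun j _ => hPA j, Finset.prod_const, ← pow_mul]
  have hiIndep : iIndep (fun j => MeasurableSpace.generateFrom {A j}) P :=
    (iIndepSet_iff_iIndep A P).mp hiIndepSet
  -- measure of each configuration
  set E : Finset (Fin ln) → Set Ω := fun S => ⋂ j, (if j ∈ S then A j else (A j)ᶜ) with hEdef
  have hEmeas : ∀ S, MeasurableSet (E S) := by
    intro S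
    refine MeasurableSet.iInter fun j => ?_
    split_ifs
    · exact hAmeas j
    · exact (hAmeas j).compl
  have hE : ∀ S : Finset (Fin ln),
      P (E S) = (q ^ cn) ^ S.card * (1 - q ^ cn) ^ (ln - S.card) := by
    intro S
    have hmeas' : ∀ j, MeasurableSet[MeasurableSpace.generateFrom {A j}]
        (if j ∈ S then A j else (A j)ᶜ) := by
      intro j
      split_ifs
      · exact MeasurableSpace.measurableSet_generateFrom (Set.mem_singleton _)
      · exact MeasurableSet.compl
          (MeasurableSpace.measurableSet_generateFrom (Set.mem_singleton (A j)))
    rw [hEdef, hiIndep.meas_iInter hmeas']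
    have hPcond : ∀ j, P (if j ∈ S then A j else (A j)ᶜ)
        = if j ∈ S then q ^ cn else 1 - q ^ cn := by
      intro j
      split_ifs
      · exact hPA j
      · rw [prob_compl_eq_one_sub (hAmeas j), hPA j]
    rw [Finset.prod_congr rfl fun j _ => hPcond j, Finset.prod_ite, Finset.prod_const,
      Finset.prod_const]
    congr 2
    · rw [Finset.filter_mem_eq_inter, Finset.univ_inter]
    · rw [Finset.filter_not, Finset.filter_mem_eq_inter, Finset.univ_inter,
        Finset.card_sdiff_of_subset (Finset.subset_univ S), Finset.card_univ, Fintype.card_fin]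
  -- decomposition of the event
  have hdecomp : {ω | Set.ncard {j : Fin ln | ∀ i, T i j ω ≤ s} = k}
      = ⋃ S ∈ Finset.univ.powersetCard k, E S := by
    ext ω
    simp only [Set.mem_setOf_eq, Set.mem_iUnion, hEdef, Set.mem_iInter]
    constructor
    · intro hk
      refine ⟨{j | ∀ i, T i j ω ≤ s}.toFinset, ?_, ?_⟩
      · rw [Finset.mem_powersetCard]
        exact ⟨Finset.subset_univ _, by rw [← Set.ncard_eq_toFinset_card']; exact hk⟩
      · intro j
        by_cases hj : j ∈ {j | ∀ i, T i j ω ≤ s}.toFinset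
        · rw [if_pos hj]
          rw [Set.mem_toFinset] at hj
          exact hj
        · rw [if_neg hj]
          rw [Set.mem_toFinset] at hj
          exact hj
    · rintro ⟨S, hS, hω⟩
      rw [Finset.mem_powersetCard] at hS
      have hset : {j : Fin ln | ∀ i, T i j ω ≤ s} = ↑S := by
        ext j
        have hj' := hω j
        simp only [Set.mem_setOf_eq, Finset.mem_coe]
        by_cases hj : j ∈ S
        · rw [if_pos hj] at hj'
          exact ⟨fun _ => hj, fun _ => hj'⟩
        · rw [if_neg hj] at hj'
          exact ⟨fun h => absurd h hj', fun h => absurd h hj⟩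
      rw [hset, Set.ncard_coe_finset, hS.2]
  -- disjointness
  have hdisj : Set.PairwiseDisjoint ↑(Finset.univ.powersetCard k (α := Fin ln)) E := by
    intro S _ S' _ hne
    refine Set.disjoint_left.mpr fun ω hω hω' => ?_
    apply hne
    ext j
    simp only [hEdef, Set.mem_iInter] at hω hω'
    have h1 := hω j; have h2 := hω' j
    constructor
    · intro hj
      rw [if_pos hj] at h1
      by_contra hj'
      rw [if_neg hj'] at h2
      exact h2 h1
    · intro hj'
      rw [if_pos hj'] at h2
      by_contra hj
      rw [if_neg hj] at h1
      exact h1 h2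
  rw [hdecomp, measure_biUnion_finset hdisj fun S _ => hEmeas S]
  have hsum : ∑ S ∈ Finset.univ.powersetCard k, P (E S)
      = (ln.choose k : ℝ≥0∞) * ((q ^ cn) ^ k * (1 - q ^ cn) ^ (ln - k)) := by
    rw [Finset.sum_congr rfl fun S hS => ?_]
    · rw [Finset.sum_const, Finset.card_powersetCard, Finset.card_univ, Fintype.card_fin,
        nsmul_eq_mul]
    · rw [hE S, (Finset.mem_powersetCard.mp hS).2]
  rw [hsum]
  have hqcn : q ^ cn ≤ 1 := pow_le_one' hq1 cn
  have hfin1 : (q ^ cn) ^ k ≠ ⊤ := by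
    exact (lt_of_le_of_lt (pow_le_one' hqcn k) ENNReal.one_lt_top).ne
  have hfin2 : (1 - q ^ cn) ^ (ln - k) ≠ ⊤ := by
    exact (lt_of_le_of_lt (pow_le_one' (tsub_le_self) (ln - k)) ENNReal.one_lt_top).ne
  simp only [ENNReal.toReal_mul, ENNReal.toReal_pow, ENNReal.toReal_natCast,
    ENNReal.toReal_sub_of_le hqcn ENNReal.one_ne_top, ENNReal.toReal_one,
    ENNReal.toReal_ofReal hFs0]
  rw [hqdef, ENNReal.toReal_ofReal hFs0]
  ring

/-- Poisson limit for the number of scaled column maxima below a level: for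
`cₙ × lₙ` matrices of i.i.d. entries with distribution function `F`
differentiable at `t*` (`0 < F t* < 1`, `f t* > 0`), under the geometric
coupling `lₙ (F t*)^{cₙ} → 1`, the number `Nₙ` of columns `j` whose maximum is
at most `t* + t/cₙ` satisfies `P(Nₙ = k) → e^{-λ} λ^k / k!` with
`λ = exp (ε t)`, `ε = f t*/F t*`. -/
theorem column_maxima_count_poisson_limit
    {Ω : Type*} [MeasurableSpace Ω] (P : Measure Ω) [IsProbabilityMeasure P]
    (F : ℝ → ℝ) (tstar fstar : ℝ)
    (h0 : 0 < F tstar) (h1 : F tstar < 1) (hf : 0 < fstar)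
    (hd : HasDerivAt F fstar tstar)
    (c l : ℕ → ℕ) (hcpos : ∀ n, 0 < c n) (hlpos : ∀ n, 0 < l n)
    (hc : Tendsto c atTop atTop) (hl : Tendsto l atTop atTop)
    (hcouple : Tendsto (fun n => (l n : ℝ) * F tstar ^ c n) atTop (nhds 1))
    (T : (n : ℕ) → Fin (c n) → Fin (l n) → Ω → ℝ)
    (hmeas : ∀ n i j, Measurable (T n i j))
    (hindep : ∀ n, iIndepFun
      (fun p : Fin (c n) × Fin (l n) => T n p.1 p.2) P)
    (hF : ∀ n i j t, (P {ω | T n i j ω ≤ t}).toReal = F t)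
    (t : ℝ) (k : ℕ) :
    Tendsto
      (fun n => (P {ω | Set.ncard {j : Fin (l n) |
          (Finset.univ.sup' (Finset.univ_nonempty_iff.mpr (Fin.pos_iff_nonempty.mp (hcpos n)))
            fun i => T n i j ω) ≤ tstar + t / c n} = k}).toReal)
      atTop
      (nhds (Real.exp (-Real.exp ((fstar / F tstar) * t)) *
        Real.exp ((fstar / F tstar) * t) ^ k / Nat.factorial k)) := by
  have key : ∀ n, (P {ω | Set.ncard {j : Fin (l n) |
      (Finset.univ.sup' (Finset.univ_nonempty_iff.mpr (Fin.pos_iff_nonempty.mp (hcpos n)))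
        fun i => T n i j ω) ≤ tstar + t / c n} = k}).toReal
      = ((l n).choose k : ℝ) * (F (tstar + t / c n) ^ c n) ^ k
        * (1 - F (tstar + t / c n) ^ c n) ^ (l n - k) := by
    intro n
    have hsetEq : {ω | Set.ncard {j : Fin (l n) |
        (Finset.univ.sup' (Finset.univ_nonempty_iff.mpr (Fin.pos_iff_nonempty.mp (hcpos n)))
          fun i => T n i j ω) ≤ tstar + t / c n} = k}
        = {ω | Set.ncard {j : Fin (l n) | ∀ i, T n i j ω ≤ tstar + t / c n} = k} := by
      ext ω
      simp only [Set.mem_setOf_eq]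
      congr! 2
      ext j
      simp [Finset.sup'_le_iff]
    rw [hsetEq]
    exact CMX_aux_prob P (hcpos n) (hlpos n) (T n) (hmeas n) (hindep n)
      (tstar + t / c n) (F (tstar + t / c n)) (fun i j => hF n i j _) k
  have hlim := CMX_aux_binom_poisson (lam := Real.exp (fstar / F tstar * t)) k hl hlpos
    (CMX_aux_coupling (t := t) h0 hd hcpos hc hcouple)
  refine hlim.congr fun n => (key n).symm
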